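/- arXiv:2208.06549 — 3 statements merged into one kernel-verified Lean document; each statement's English description precedes it below -/
import Mathlib

section
/- Let X = μ + γZ + √Z·A·N_n be an n-dimensional normal mean-variance mixture with Σ = AAᵀ, and let U(w) = -e^{-aw} with a > 0. For a portfolio x ∈ ℝⁿ with wealth W(x) = W₀(1+r_f) + W₀ xᵀ(X - 1·r_f), we have E[U(W(x))] = -e^{-aW₀(1+r_f)} e^{-aW₀ xᵀ(μ - 1·r_f)} L_Z(aW₀ xᵀγ - (a²W₀²/2) xᵀΣx), where L_Z is the Laplace transform of Z, provided the argument of L_Z is in the domain of finiteness. -/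
open MeasureTheory ProbabilityTheory Real Matrix
open scoped ENNReal NNReal

lemma pdf_mul_exp (t y : ℝ) :
    gaussianPDFReal 0 1 y * Real.exp (t * y)
      = Real.exp (t ^ 2 / 2) * gaussianPDFReal t 1 y := by
  simp only [gaussianPDFReal_def]
  rw [mul_assoc, ← Real.exp_add]
  conv_rhs => rw [mul_left_comm, ← Real.exp_add]
  congr 1
  push_cast
  ring

lemma gauss_integrable (t : ℝ) :
    Integrable (fun y => Real.exp (t * y)) (gaussianReal 0 1) := by
  rw [gaussianReal_of_var_ne_zero _ one_ne_zero,
    integrable_withDensity_iff (measurable_gaussianPDF _ _)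
      (ae_of_all _ fun _ => ENNReal.ofReal_lt_top)]
  have : (fun y => Real.exp (t * y) * (gaussianPDF 0 1 y).toReal)
      = fun y => Real.exp (t ^ 2 / 2) * gaussianPDFReal t 1 y := by
    funext y
    rw [gaussianPDF_def, ENNReal.toReal_ofReal (gaussianPDFReal_nonneg _ _ _), mul_comm,
      pdf_mul_exp]
  rw [this]
  exact (integrable_gaussianPDFReal t 1).const_mul _

lemma gauss_mgf (t : ℝ) :
    ∫ y, Real.exp (t * y) ∂(gaussianReal 0 1) = Real.exp (t ^ 2 / 2) := by
  rw [gaussianReal_of_var_ne_zero _ one_ne_zero]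
  have h : gaussianPDF 0 1 = fun y => ((gaussianPDFReal 0 1 y).toNNReal : ℝ≥0∞) := rfl
  rw [h, integral_withDensity_eq_integral_smul
    (by exact measurable_gaussianPDFReal 0 1 |>.real_toNNReal)]
  have : (fun y => (gaussianPDFReal 0 1 y).toNNReal • Real.exp (t * y))
      = fun y => Real.exp (t ^ 2 / 2) * gaussianPDFReal t 1 y := by
    funext y
    rw [NNReal.smul_def, smul_eq_mul, Real.coe_toNNReal _ (gaussianPDFReal_nonneg _ _ _),
      pdf_mul_exp]
  rw [this, integral_const_mul, integral_gaussianPDFReal_eq_one t one_ne_zero, mul_one]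

/-- Type synonym for `ℝ` carrying the standard gaussian as volume. -/
def RG : Type := ℝ

def RG.r : RG → ℝ := fun t => t

instance : MeasurableSpace RG := inferInstanceAs (MeasurableSpace ℝ)
noncomputable instance : MeasureSpace RG := ⟨gaussianReal 0 1⟩
instance : IsProbabilityMeasure (volume : Measure RG) :=
  inferInstanceAs (IsProbabilityMeasure (gaussianReal 0 1))

lemma pi_gauss_integrable {n : ℕ} (c : Fin n → ℝ) :
    Integrable (fun y : Fin n → ℝ => Real.exp (c ⬝ᵥ y))
      (Measure.pi fun _ : Fin n => gaussianReal 0 1) := by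
  have h : Integrable (fun y : Fin n → RG => ∏ i, Real.exp (c i * (y i).r)) :=
    @Integrable.fintype_prod _ _ _ _ _ (fun i (t : RG) => Real.exp (c i * t.r)) _ (fun _ => (volume : Measure RG)) (fun _ => (inferInstance : SigmaFinite (volume : Measure RG)))
      (fun i => gauss_integrable (c i))
  have h2 : Integrable (fun y : Fin n → ℝ => ∏ i, Real.exp (c i * y i))
      (Measure.pi fun _ : Fin n => gaussianReal 0 1) := h
  refine h2.congr (ae_of_all _ fun y => ?_)
  simp only [dotProduct, Real.exp_sum]

lemma pi_gauss_mgf {n : ℕ} (c : Fin n → ℝ) :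
    ∫ y, Real.exp (c ⬝ᵥ y) ∂(Measure.pi fun _ : Fin n => gaussianReal 0 1)
      = Real.exp ((c ⬝ᵥ c) / 2) := by
  have h : ∫ y : Fin n → RG, ∏ i, Real.exp (c i * (y i).r) = ∏ i, ∫ t : RG, Real.exp (c i * t.r) :=
    @integral_fintype_prod_eq_prod _ _ _ _ _ (fun i (t : RG) => Real.exp (c i * t.r)) _ (fun _ => (volume : Measure RG)) (fun _ => (inferInstance : SigmaFinite (volume : Measure RG)))
  have h2 : ∫ y, Real.exp (c ⬝ᵥ y) ∂(Measure.pi fun _ : Fin n => gaussianReal 0 1)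
      = ∫ y : Fin n → ℝ, (∏ i, Real.exp (c i * y i)) ∂(Measure.pi fun _ : Fin n => gaussianReal 0 1) := by
    refine integral_congr_ae (ae_of_all _ fun y => ?_)
    simp only [dotProduct, Real.exp_sum]
  have h' : (∫ y : Fin n → ℝ, (∏ i, Real.exp (c i * y i))
      ∂(Measure.pi fun _ : Fin n => gaussianReal 0 1))
      = ∏ i, ∫ t : RG, Real.exp (c i * t.r) := h
  rw [h2, h']
  have h3 : ∀ i, ∫ t : RG, Real.exp (c i * t.r) = Real.exp ((c i) ^ 2 / 2) :=
    fun i => gauss_mgf (c i)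
  simp_rw [h3, ← Real.exp_sum, dotProduct]
  congr 1
  rw [Finset.sum_div]
  congr 1
  funext i
  ring

set_option maxHeartbeats 1000000 in
/-- For the NMVM model `X = μ + γ Z + √Z A N_n` with `Σ = A Aᵀ` and
exponential utility `U(w) = -exp (-a w)`, the expected utility of the wealth
`W(x) = W₀(1 + r_f) + W₀ xᵀ(X - 1 r_f)` equals
`-exp (-a W₀ (1+r_f)) exp (-a W₀ xᵀ(μ - 1 r_f)) L_Z(a W₀ xᵀγ - (a² W₀²/2) xᵀ Σ x)`,
where `L_Z(s) = E[exp (-s Z)]`, provided this last expectation is finite. -/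
theorem statement1
    {Ω : Type*} [MeasureSpace Ω] (P : Measure Ω) [IsProbabilityMeasure P]
    (n : ℕ) (μ γ : Fin n → ℝ) (A : Matrix (Fin n) (Fin n) ℝ) (hA : IsUnit A.det)
    (Z : Ω → ℝ) (Nn : Ω → Fin n → ℝ)
    (hZmeas : Measurable Z) (hNmeas : Measurable Nn)
    (hZpos : ∀ ω, 0 < Z ω)
    (hNn : Measure.map Nn P = Measure.pi fun _ : Fin n => gaussianReal 0 1)
    (hindep : IndepFun Z Nn P)
    (X : Ω → Fin n → ℝ)
    (hX : ∀ ω, X ω = μ + Z ω • γ + Real.sqrt (Z ω) • A.mulVec (Nn ω))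
    (a W₀ rf : ℝ) (ha : 0 < a) (hW₀ : 0 < W₀)
    (x : Fin n → ℝ)
    (W : Ω → ℝ)
    (hW : ∀ ω, W ω = W₀ * (1 + rf) + W₀ * (x ⬝ᵥ (X ω - fun _ => rf)))
    (hint : Integrable (fun ω =>
      Real.exp (-(a * W₀ * (x ⬝ᵥ γ) - a ^ 2 * W₀ ^ 2 / 2 * (x ⬝ᵥ (A * Aᵀ).mulVec x)) * Z ω)) P) :
    ∫ ω, -Real.exp (-a * W ω) ∂P
      = -Real.exp (-a * W₀ * (1 + rf)) * Real.exp (-a * W₀ * (x ⬝ᵥ (μ - fun _ => rf)))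
        * ∫ ω, Real.exp (-(a * W₀ * (x ⬝ᵥ γ) - a ^ 2 * W₀ ^ 2 / 2 * (x ⬝ᵥ (A * Aᵀ).mulVec x)) * Z ω) ∂P := by
  classical
  set s : ℝ := a * W₀ * (x ⬝ᵥ γ) - a ^ 2 * W₀ ^ 2 / 2 * (x ⬝ᵥ (A * Aᵀ).mulVec x) with hsdef
  set b : ℝ := a * W₀ with hbdef
  set v : Fin n → ℝ := x ᵥ* A with hvdef
  have hSig : x ⬝ᵥ (A * Aᵀ).mulVec x = v ⬝ᵥ v := by
    rw [← mulVec_mulVec, mulVec_transpose, dotProduct_mulVec]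
  have hs : s = b * (x ⬝ᵥ γ) - b ^ 2 / 2 * (v ⬝ᵥ v) := by
    rw [hsdef, hSig, hbdef]; ring
  -- the joint integrand
  set F : ℝ × (Fin n → ℝ) → ℝ := fun p =>
    Real.exp (-(b * (x ⬝ᵥ γ)) * p.1) * Real.exp ((-(b * Real.sqrt p.1)) • v ⬝ᵥ p.2) with hFdef
  have hFmeas : Measurable F := by
    simp only [hFdef, smul_dotProduct, smul_eq_mul, dotProduct]
    fun_prop
  -- pointwise identity
  have hpt : ∀ ω, -Real.exp (-a * W ω)
      = -(Real.exp (-a * W₀ * (1 + rf)) * Real.exp (-a * W₀ * (x ⬝ᵥ (μ - fun _ => rf)))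
          * F (Z ω, Nn ω)) := by
    intro ω
    have hdot : x ⬝ᵥ (X ω - fun _ => rf)
        = x ⬝ᵥ (μ - fun _ => rf) + Z ω * (x ⬝ᵥ γ)
          + Real.sqrt (Z ω) * (v ⬝ᵥ Nn ω) := by
      have hv2 : v ⬝ᵥ Nn ω = x ⬝ᵥ A.mulVec (Nn ω) := (dotProduct_mulVec x A (Nn ω)).symm
      rw [hX, hv2]
      simp only [dotProduct, Pi.add_apply, Pi.sub_apply, Pi.smul_apply, smul_eq_mul,
        Finset.mul_sum, ← Finset.sum_add_distrib]
      exact Finset.sum_congr rfl fun i _ => by ring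
    rw [hW, hdot, hFdef]
    simp only [smul_dotProduct, smul_eq_mul]
    rw [← Real.exp_add, ← Real.exp_add, ← Real.exp_add]
    congr 2
    ring
  -- now the key identity on the F-integral
  have hmap : Measure.map (fun ω => (Z ω, Nn ω)) P
      = (P.map Z).prod (Measure.pi fun _ : Fin n => gaussianReal 0 1) := by
    rw [← hNn]
    exact (indepFun_iff_map_prod_eq_prod_map_map hZmeas.aemeasurable
      hNmeas.aemeasurable).mp hindep
  have hstep : ∫ ω, F (Z ω, Nn ω) ∂P
      = ∫ p, F p ∂((P.map Z).prod (Measure.pi fun _ : Fin n => gaussianReal 0 1)) := by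
    rw [← hmap, integral_map (hZmeas.prodMk hNmeas).aemeasurable
      hFmeas.aestronglyMeasurable]
  have hae : ∀ᵐ z ∂(P.map Z), 0 < z :=
    (ae_map_iff hZmeas.aemeasurable measurableSet_Ioi).mpr (ae_of_all _ hZpos)
  -- inner integral computation
  have hinner : ∀ z : ℝ, 0 < z →
      ∫ y, F (z, y) ∂(Measure.pi fun _ : Fin n => gaussianReal 0 1)
        = Real.exp (-s * z) := by
    intro z hz
    rw [hFdef]
    simp only
    rw [integral_const_mul, pi_gauss_mgf ((-(b * Real.sqrt z)) • v)]
    rw [← Real.exp_add]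
    congr 1
    rw [smul_dotProduct, dotProduct_smul, hs]
    simp only [smul_eq_mul]
    have h2 : Real.sqrt z * Real.sqrt z = z := Real.mul_self_sqrt hz.le
    linear_combination (b ^ 2 * (v ⬝ᵥ v) / 2) * h2
  -- integrability on the product
  have hs_int : Integrable (fun z => Real.exp (-s * z)) (P.map Z) := by
    rw [integrable_map_measure
      (Continuous.aestronglyMeasurable (by continuity)) hZmeas.aemeasurable]
    exact hint
  have hFint : Integrable F
      ((P.map Z).prod (Measure.pi fun _ : Fin n => gaussianReal 0 1)) := by
    rw [integrable_prod_iff hFmeas.aestronglyMeasurable]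
    constructor
    · refine ae_of_all _ fun z => ?_
      simp only [hFdef]
      exact (pi_gauss_integrable ((-(b * Real.sqrt z)) • v)).const_mul _
    · apply hs_int.congr
      filter_upwards [hae] with z hz
      rw [← hinner z hz]
      refine integral_congr_ae (ae_of_all _ fun y => ?_)
      have hpos : 0 ≤ F (z, y) := by simp only [hFdef]; positivity
      simp [Real.norm_of_nonneg hpos]
  have hFeq : ∫ ω, F (Z ω, Nn ω) ∂P = ∫ ω, Real.exp (-s * Z ω) ∂P := by
    rw [hstep, integral_prod _ hFint,
      integral_congr_ae (g := fun z => Real.exp (-s * z)) ?_,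
      integral_map hZmeas.aemeasurable (Continuous.aestronglyMeasurable (by continuity))]
    filter_upwards [hae] with z hz
    exact hinner z hz
  rw [integral_congr_ae (ae_of_all _ hpt), integral_neg, integral_const_mul, hFeq]
  ring
end

section
/- With notation A = γᵀΣ⁻¹γ, C = (μ-1r_f)ᵀΣ⁻¹(μ-1r_f), the maximal value of g(x) = aW₀xᵀγ - (a²W₀²/2)xᵀΣx over {x : xᵀ(μ - 1r_f) = c} equals A/2 - (q_c²/2)C, where q_c = (B - aW₀c)/C and B = γᵀΣ⁻¹(μ-1r_f). -/
open Matrix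

/-- With `A = γᵀΣ⁻¹γ`, `B = γᵀΣ⁻¹(μ - 1 r_f)`,
`C = (μ - 1 r_f)ᵀΣ⁻¹(μ - 1 r_f)` and `q_c = (B - a W₀ c)/C`, the maximal value of
`g(x) = a W₀ xᵀγ - (a² W₀²/2) xᵀ Σ x` over `{x : xᵀ(μ - 1 r_f) = c}` equals
`A/2 - (q_c²/2) C`. -/
theorem statement3
    (n : ℕ) (a W₀ : ℝ) (ha : 0 < a) (hW₀ : 0 < W₀)
    (γ μ : Fin n → ℝ) (rf : ℝ) (S : Matrix (Fin n) (Fin n) ℝ)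
    (hS : S.PosDef)
    (m : Fin n → ℝ) (hm : m = μ - fun _ => rf) (hmne : m ≠ 0)
    (g : (Fin n → ℝ) → ℝ)
    (hg : ∀ x, g x = a * W₀ * (x ⬝ᵥ γ) - a ^ 2 * W₀ ^ 2 / 2 * (x ⬝ᵥ S.mulVec x))
    (c A B C qc : ℝ)
    (hA : A = γ ⬝ᵥ S⁻¹.mulVec γ)
    (hB : B = γ ⬝ᵥ S⁻¹.mulVec m)
    (hC : C = m ⬝ᵥ S⁻¹.mulVec m)
    (hqc : qc = (B - a * W₀ * c) / C) :
    IsGreatest {v : ℝ | ∃ x : Fin n → ℝ, x ⬝ᵥ m = c ∧ g x = v} (A / 2 - qc ^ 2 / 2 * C) := by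
  set t : ℝ := a * W₀ with hT
  have ht : 0 < t := mul_pos ha hW₀
  have htne : t ≠ 0 := ht.ne'
  have hSinv : S⁻¹.PosDef := hS.inv
  have hCpos : 0 < C := by
    have := hSinv.dotProduct_mulVec_pos hmne
    simpa [hC] using this
  have hqcC : qc * C = B - t * c := by
    rw [hqc]; field_simp
  have hSd : IsUnit S.det := hS.det_pos.ne'.isUnit
  have hSS : S * S⁻¹ = 1 := Matrix.mul_nonsing_inv S hSd
  have hmulinv : ∀ v : Fin n → ℝ, S.mulVec (S⁻¹.mulVec v) = v := by
    intro v
    rw [Matrix.mulVec_mulVec, hSS, Matrix.one_mulVec]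
  have hST : Sᵀ = S := by
    rw [← Matrix.conjTranspose_eq_transpose_of_trivial]; exact hS.isHermitian
  have hSTi : S⁻¹ᵀ = S⁻¹ := by
    rw [← Matrix.conjTranspose_eq_transpose_of_trivial]; exact hSinv.isHermitian
  have hsymm : ∀ x y : Fin n → ℝ, x ⬝ᵥ S.mulVec y = y ⬝ᵥ S.mulVec x := by
    intro x y
    rw [Matrix.dotProduct_mulVec, ← Matrix.mulVec_transpose, hST, dotProduct_comm]
  have hsymm' : ∀ x y : Fin n → ℝ, x ⬝ᵥ S⁻¹.mulVec y = y ⬝ᵥ S⁻¹.mulVec x := by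
    intro x y
    rw [Matrix.dotProduct_mulVec, ← Matrix.mulVec_transpose, hSTi, dotProduct_comm]
  set xs : Fin n → ℝ := t⁻¹ • S⁻¹.mulVec (γ - qc • m) with hxs
  have hSx : S.mulVec xs = t⁻¹ • (γ - qc • m) := by
    rw [hxs, Matrix.mulVec_smul, hmulinv]
  have h1 : xs ⬝ᵥ γ = t⁻¹ * (A - qc * B) := by
    rw [hxs, smul_dotProduct, smul_eq_mul]
    congr 1
    rw [dotProduct_comm, hsymm' γ]
    simp [dotProduct_sub, Matrix.mulVec_smul, dotProduct_smul, smul_eq_mul, hA, hB]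
    exact Or.inl (hsymm' m γ)
  have h2 : xs ⬝ᵥ m = c := by
    rw [hxs, smul_dotProduct, smul_eq_mul, dotProduct_comm, hsymm' m]
    have : (γ - qc • m) ⬝ᵥ S⁻¹.mulVec m = t * c := by
      simp [sub_dotProduct, smul_dotProduct, smul_eq_mul, ← hB, ← hC]
      have : qc * C = B - t * c := hqcC
      linarith
    rw [this]
    field_simp
  have hkey : ∀ x : Fin n → ℝ, x ⬝ᵥ m = c →
      g x = A / 2 - qc ^ 2 / 2 * C - t ^ 2 / 2 * ((x - xs) ⬝ᵥ S.mulVec (x - xs)) := by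
    intro x hxm
    have hxSxs : x ⬝ᵥ S.mulVec xs = t⁻¹ * (x ⬝ᵥ γ - qc * c) := by
      rw [hSx]
      simp [dotProduct_smul, dotProduct_sub, smul_eq_mul, hxm]
    have hxsSxs : xs ⬝ᵥ S.mulVec xs = t⁻¹ * (t⁻¹ * (A - qc * B) - qc * c) := by
      rw [hSx]
      simp [dotProduct_smul, dotProduct_sub, smul_eq_mul, h1, h2]
    have hD : (x - xs) ⬝ᵥ S.mulVec (x - xs)
        = x ⬝ᵥ S.mulVec x - 2 * (t⁻¹ * (x ⬝ᵥ γ - qc * c))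
          + t⁻¹ * (t⁻¹ * (A - qc * B) - qc * c) := by
      have e : (x - xs) ⬝ᵥ S.mulVec (x - xs)
          = x ⬝ᵥ S.mulVec x - xs ⬝ᵥ S.mulVec x - (x ⬝ᵥ S.mulVec xs - xs ⬝ᵥ S.mulVec xs) := by
        rw [Matrix.mulVec_sub, dotProduct_sub, sub_dotProduct, sub_dotProduct]
      rw [e, hsymm xs x, hxSxs, hxsSxs]
      ring
    have ha2 : a ^ 2 * W₀ ^ 2 = t ^ 2 := by rw [hT]; ring
    rw [hg, hD, ha2]
    have h3 : qc ^ 2 * C = qc * B - qc * (t * c) := by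
      rw [pow_two, mul_assoc, hqcC]; ring
    field_simp
    linear_combination h3
  constructor
  · exact ⟨xs, h2, by rw [hkey xs h2]; simp⟩
  · rintro v ⟨x, hxm, rfl⟩
    rw [hkey x hxm]
    have hD0 : 0 ≤ (x - xs) ⬝ᵥ S.mulVec (x - xs) := by
      have := hS.posSemidef.dotProduct_mulVec_nonneg (x - xs)
      simpa using this
    nlinarith [sq_nonneg t]
end

section
/- Under the same setup, if s₀ is finite then H(θ) → +∞ as θ → θ₀⁻ and as θ → -θ₀⁺, where θ₀ = √((A-2s₀)/C). Consequently any minimizer of H on (-θ₀, θ₀) lies in (-θ₀, 0]. -/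
open MeasureTheory Real Filter

/-- With `H(θ) = exp (C θ) L_Z(A/2 - (θ²/2) C)` (here formulated with the
`ℝ≥0∞`-valued Laplace transform so that `L_Z(s₀) = +∞` makes sense), if `s₀` is finite
then `H(θ) → +∞` as `θ → θ₀⁻` and as `θ → (-θ₀)⁺`, where `θ₀ = √((A - 2 s₀)/C)`;
consequently any minimizer of `H` on `(-θ₀, θ₀)` lies in `(-θ₀, 0]`. -/
theorem statement5
    {Ω : Type*} [MeasureSpace Ω] (P : Measure Ω) [IsProbabilityMeasure P]
    (Z : Ω → ℝ) (hZmeas : Measurable Z) (hZpos : ∀ ω, 0 < Z ω)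
    (s₀ : ℝ) (hs₀ : s₀ < 0)
    (L : ℝ → ENNReal)
    (hL : ∀ s : ℝ, L s = ∫⁻ ω, ENNReal.ofReal (Real.exp (-s * Z ω)) ∂P)
    (hfin : ∀ s : ℝ, s₀ < s → L s < ⊤)
    (hinf : L s₀ = ⊤)
    (A C : ℝ) (hA : 0 ≤ A) (hC : 0 < C)
    (θ₀ : ℝ) (hθ₀ : θ₀ = Real.sqrt ((A - 2 * s₀) / C))
    (H : ℝ → ENNReal)
    (hH : ∀ θ, H θ = ENNReal.ofReal (Real.exp (C * θ)) * L (A / 2 - θ ^ 2 / 2 * C)) :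
    Tendsto H (nhdsWithin θ₀ (Set.Iio θ₀)) (nhds ⊤) ∧
    Tendsto H (nhdsWithin (-θ₀) (Set.Ioi (-θ₀))) (nhds ⊤) ∧
    ∀ θ ∈ Set.Ioo (-θ₀) θ₀, IsMinOn H (Set.Ioo (-θ₀) θ₀) θ → θ ∈ Set.Ioc (-θ₀) 0 := by

  have hc : 0 < (A - 2 * s₀) / C := div_pos (by linarith) hC
  have hθ₀pos : 0 < θ₀ := by rw [hθ₀]; exact Real.sqrt_pos.mpr hc
  have hθ₀sq : θ₀ ^ 2 = (A - 2 * s₀) / C := by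
    rw [hθ₀, Real.sq_sqrt hc.le]
  have hs₀eq : A / 2 - θ₀ ^ 2 / 2 * C = s₀ := by
    rw [hθ₀sq]; field_simp; ring
  have hsgt : ∀ θ ∈ Set.Ioo (-θ₀) θ₀, s₀ < A / 2 - θ ^ 2 / 2 * C := by
    intro θ hθ
    have h1 : θ ^ 2 < θ₀ ^ 2 := by nlinarith [hθ.1, hθ.2]
    nlinarith [hs₀eq]
  -- L is antitone
  have hLanti : Antitone L := by
    intro a b hab
    rw [hL a, hL b]
    refine lintegral_mono fun ω => ENNReal.ofReal_le_ofReal (Real.exp_le_exp.mpr ?_)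
    have := (hZpos ω).le
    nlinarith
  -- L tends to ⊤ from the right at s₀
  have hLtop : Tendsto L (nhdsWithin s₀ (Set.Ioi s₀)) (nhds ⊤) := by
    rw [ENNReal.tendsto_nhds_top_iff_nat]
    intro n
    have key : ∃ s, s₀ < s ∧ (n : ENNReal) < L s := by
      by_contra h
      push_neg at h
      set f : ℕ → Ω → ENNReal :=
        fun k ω => ENNReal.ofReal (Real.exp (-(s₀ + 1 / (k + 1)) * Z ω)) with hf
      have hmono : Monotone f := by
        intro j k hjk ω
        refine ENNReal.ofReal_le_ofReal (Real.exp_le_exp.mpr ?_)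
        have h1 : (1 : ℝ) / (k + 1) ≤ 1 / (j + 1) := by
          apply one_div_le_one_div_of_le
          · positivity
          · exact_mod_cast by omega
        have := (hZpos ω).le
        nlinarith
      have hmeas : ∀ k, Measurable (f k) := by
        intro k
        exact ((hZmeas.const_mul _).exp).ennreal_ofReal
      have hsup : ∀ ω, (⨆ k, f k ω) = ENNReal.ofReal (Real.exp (-s₀ * Z ω)) := by
        intro ω
        have htend : Tendsto (fun k : ℕ => f k ω) atTop
            (nhds (ENNReal.ofReal (Real.exp (-s₀ * Z ω)))) := by
          have h0 : Tendsto (fun k : ℕ => (1 : ℝ) / (k + 1)) atTop (nhds 0) :=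
            tendsto_one_div_add_atTop_nhds_zero_nat
          have h1 : Tendsto (fun k : ℕ => -(s₀ + 1 / (k + 1)) * Z ω) atTop
              (nhds (-s₀ * Z ω)) := by
            have h2 : Tendsto (fun k : ℕ => s₀ + (1 : ℝ) / (k + 1)) atTop (nhds (s₀ + 0)) :=
              tendsto_const_nhds.add h0
            have := (h2.neg).mul_const (Z ω)
            simpa using this
          exact (ENNReal.continuous_ofReal.tendsto _).comp
            ((Real.continuous_exp.tendsto _).comp h1)
        exact tendsto_nhds_unique (tendsto_atTop_iSup fun j k hjk => hmono hjk ω) htend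
      have hfinsum : L s₀ ≤ (n : ENNReal) := by
        have heq : L s₀ = ⨆ k, ∫⁻ ω, f k ω ∂P := by
          rw [hL s₀, ← lintegral_iSup hmeas hmono]
          congr 1
          funext ω
          rw [hsup ω]
        rw [heq]
        refine iSup_le fun k => ?_
        have hk : s₀ < s₀ + 1 / (k + 1 : ℝ) := by
          have h01 : (0:ℝ) < 1/(k+1) := by positivity
          linarith
        have : L (s₀ + 1 / (k + 1)) ≤ n := h _ hk
        rwa [hL] at this
      rw [hinf] at hfinsum
      exact absurd hfinsum (by simp)
    obtain ⟨s, hs, hns⟩ := key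
    filter_upwards [Ioc_mem_nhdsGT_of_mem ⟨le_refl s₀, hs⟩] with x hx
    exact hns.trans_le (hLanti hx.2)
  -- generic: tendsto of H to ⊤ given tendsto of the inner map
  have hgen : ∀ (θ₁ : ℝ) (l : Filter ℝ), l ≤ nhds θ₁ →
      Tendsto (fun θ => A / 2 - θ ^ 2 / 2 * C) l (nhdsWithin s₀ (Set.Ioi s₀)) →
      Tendsto H l (nhds ⊤) := by
    intro θ₁ l hl hs
    have hL' := hLtop.comp hs
    have hexp : Tendsto (fun θ => ENNReal.ofReal (Real.exp (C * θ))) l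
        (nhds (ENNReal.ofReal (Real.exp (C * θ₁)))) := by
      refine Tendsto.mono_left ?_ hl
      exact (ENNReal.continuous_ofReal.tendsto _).comp
        ((Real.continuous_exp.tendsto _).comp ((continuous_const.mul continuous_id).tendsto θ₁))
    have hne : ENNReal.ofReal (Real.exp (C * θ₁)) ≠ 0 :=
      (ENNReal.ofReal_pos.mpr (Real.exp_pos _)).ne'
    have := ENNReal.Tendsto.mul hexp (Or.inl hne) hL' (Or.inr ENNReal.ofReal_ne_top)
    rw [ENNReal.mul_top hne] at this
    refine this.congr fun θ => ?_
    simp [hH, Function.comp]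
  have hcont : Continuous (fun θ : ℝ => A / 2 - θ ^ 2 / 2 * C) := by fun_prop
  have h1 : Tendsto H (nhdsWithin θ₀ (Set.Iio θ₀)) (nhds ⊤) := by
    refine hgen θ₀ _ nhdsWithin_le_nhds ?_
    rw [tendsto_nhdsWithin_iff]
    constructor
    · have := (hcont.tendsto θ₀).mono_left (nhdsWithin_le_nhds (s := Set.Iio θ₀))
      rwa [hs₀eq] at this
    · filter_upwards [Ioo_mem_nhdsLT_of_mem (a := -θ₀) (c := θ₀) ⟨by linarith, le_refl θ₀⟩] with θ hθ
      exact hsgt θ hθ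
  have h2 : Tendsto H (nhdsWithin (-θ₀) (Set.Ioi (-θ₀))) (nhds ⊤) := by
    refine hgen (-θ₀) _ nhdsWithin_le_nhds ?_
    rw [tendsto_nhdsWithin_iff]
    constructor
    · have := (hcont.tendsto (-θ₀)).mono_left (nhdsWithin_le_nhds (s := Set.Ioi (-θ₀)))
      have heq : A / 2 - (-θ₀) ^ 2 / 2 * C = s₀ := by rw [neg_pow]; simpa using hs₀eq
      rwa [heq] at this
    · filter_upwards [Ioo_mem_nhdsGT_of_mem (a := θ₀) (c := -θ₀) ⟨le_refl (-θ₀), by linarith⟩] with θ hθ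
      exact hsgt θ hθ
  refine ⟨h1, h2, ?_⟩
  intro θ hθ hmin
  refine ⟨hθ.1, ?_⟩
  by_contra hpos
  push_neg at hpos
  have hmem : -θ ∈ Set.Ioo (-θ₀) θ₀ := ⟨by linarith [hθ.2], by linarith [hθ.1]⟩
  have hle := hmin hmem
  simp only [Set.mem_setOf_eq] at hle
  rw [hH θ, hH (-θ), (by ring : (-θ) ^ 2 = θ ^ 2)] at hle
  have hℓtop : L (A / 2 - θ ^ 2 / 2 * C) ≠ ⊤ := (hfin _ (hsgt θ hθ)).ne
  have hℓ0 : L (A / 2 - θ ^ 2 / 2 * C) ≠ 0 := by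
    rw [hL]
    intro h0
    rw [lintegral_eq_zero_iff ((hZmeas.const_mul _).exp).ennreal_ofReal] at h0
    obtain ⟨ω, hω⟩ := h0.exists
    simp only [Pi.zero_apply, ENNReal.ofReal_eq_zero] at hω
    exact absurd hω (not_le.mpr (Real.exp_pos _))
  rw [ENNReal.mul_le_mul_iff_left hℓ0 hℓtop] at hle
  rw [ENNReal.ofReal_le_ofReal_iff (Real.exp_pos _).le, Real.exp_le_exp] at hle
  nlinarith
end
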